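/- (SMDCT VIII discrete orthogonality) Let N, n ≥ 1 and let k, k' ∈ D_N^+, i.e., integer vectors with N−1 ≥ k_1 ≥ … ≥ k_n ≥ 0 and N−1 ≥ k'_1 ≥ … ≥ k'_n ≥ 0. Then Σ_{r ∈ D_N^+} H_r^{−1} · cos⁺_{k+ρ}(2(r_1+1/2)/(2N+1), …, 2(r_n+1/2)/(2N+1)) · cos⁺_{k'+ρ}(2(r_1+1/2)/(2N+1), …, 2(r_n+1/2)/(2N+1)) = H_k · ((2N+1)/4)^n · δ_{k,k'}, where ρ = (1/2,…,1/2). -/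

import Mathlib

open Real Finset

/-- The symmetric multivariate cosine function
`cos⁺_λ(x) = Σ_{σ ∈ S_n} ∏_{i=1}^n cos(π λ_{σ(i)} x_i)`. -/
noncomputable def cosPlus (n : ℕ) (lam x : Fin n → ℝ) : ℝ :=
  ∑ σ : Equiv.Perm (Fin n), ∏ i : Fin n, Real.cos (Real.pi * lam (σ i) * x i)

/-- `H_k`, the order of the stabilizer of `k` under the permutation action of `S_n`
(where `σ(k)_i = k_{σ(i)}`, i.e. `σ(k) = k ∘ σ`). -/
def Hstab {n : ℕ} {α : Type*} [DecidableEq α] (k : Fin n → α) : ℕ :=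
  (Finset.univ.filter fun σ : Equiv.Perm (Fin n) => k ∘ σ = k).card



lemma sum_cos_odd (M : ℕ) (θ : ℝ) (hθ : Real.sin θ ≠ 0) :
    ∑ r ∈ Finset.range M, Real.cos ((2*r+1)*θ) = Real.sin (2*M*θ) / (2*Real.sin θ) := by
  rw [eq_div_iff (by simpa using hθ)]
  have key : ∀ r : ℕ, Real.cos ((2*(r:ℝ)+1)*θ) * (2*Real.sin θ)
      = Real.sin ((2*((r:ℝ)+1))*θ) - Real.sin ((2*(r:ℝ))*θ) := by
    intro r
    rw [Real.sin_sub_sin]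
    ring_nf
  rw [Finset.sum_mul]
  have := Finset.sum_range_sub (f := fun r : ℕ => Real.sin ((2*(r:ℝ))*θ)) M
  simp only [Nat.cast_add, Nat.cast_one] at this
  rw [Finset.sum_congr rfl (fun r _ => key r), this]
  simp

lemma sum_cos_m (N : ℕ) (m : ℤ) (hm0 : m ≠ 0) (hma : |m| < 2*(N:ℤ)+1) :
    ∑ r ∈ Finset.range N, Real.cos ((2*(r:ℝ)+1) * (π*m/(2*N+1)))
      = - Real.cos (m*π) / 2 := by
  set c : ℝ := 2*(N:ℝ)+1 with hc
  have hcpos : (0:ℝ) < c := by positivity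
  set θ : ℝ := π*m/c with hθdef
  have hsin : Real.sin θ ≠ 0 := by
    intro h
    obtain ⟨q, hq⟩ := Real.sin_eq_zero_iff.mp h
    have hπ := Real.pi_ne_zero
    have h1 : ((q:ℝ)*π)*c = π*m := by rw [hq, hθdef]; field_simp
    have hqm : (q:ℝ)*c = m := mul_left_cancel₀ hπ (by linarith : π*((q:ℝ)*c) = π*m)
    have hqz : (q:ℤ) * (2*(N:ℤ)+1) = m := by
      exact_mod_cast (by push_cast [hc] at hqm ⊢; linarith : ((q * (2*(N:ℤ)+1) : ℤ) : ℝ) = (m:ℝ))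
    rcases eq_or_ne q 0 with rfl | hq0
    · simp at hqz; exact hm0 hqz.symm
    · have h2 : (1:ℤ) ≤ |q| := Int.one_le_abs hq0
      have : 2*(N:ℤ)+1 ≤ |m| := by
        rw [← hqz, abs_mul, abs_of_nonneg (by omega : (0:ℤ) ≤ 2*(N:ℤ)+1)]
        nlinarith [abs_nonneg q]
      omega
  have hkey := sum_cos_odd N θ hsin
  rw [hkey]
  have h2N : 2*(N:ℝ)*θ = m*π - θ := by
    rw [hθdef]; field_simp; ring
  rw [h2N, Real.sin_sub, Real.sin_int_mul_pi]
  field_simp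
  ring


lemma cos_int_pi (m : ℤ) : Real.cos (m*π) = (if Even m then (1:ℝ) else -1) := by
  rcases Int.even_or_odd m with ⟨t, ht⟩ | ⟨t, ht⟩
  · subst ht
    rw [if_pos ⟨t, rfl⟩]
    push_cast
    rw [show ((t:ℝ)+t)*π = t*(2*π) by ring, Real.cos_int_mul_two_pi]
  · subst ht
    rw [if_neg (by simp [Int.even_add_one, parity_simps])]
    push_cast
    rw [show (2*(t:ℝ)+1)*π = t*(2*π) + π by ring, Real.cos_add_pi, Real.cos_int_mul_two_pi]


lemma oneD (N : ℕ) (a b : ℕ) (ha : a < N) (hb : b < N) :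
    ∑ v : Fin N, Real.cos (π * ((a:ℝ)+1/2) * (2*(((v:ℕ):ℝ)+1/2)/(2*(N:ℝ)+1))) *
        Real.cos (π * ((b:ℝ)+1/2) * (2*(((v:ℕ):ℝ)+1/2)/(2*(N:ℝ)+1)))
      = if a = b then (2*(N:ℝ)+1)/4 else 0 := by
  have hc : (2*(N:ℝ)+1) ≠ 0 := by positivity
  set m1 : ℤ := (a:ℤ)+b+1 with hm1
  set m2 : ℤ := (a:ℤ)-b with hm2
  have hterm : ∀ r : ℕ,
      Real.cos (π * ((a:ℝ)+1/2) * (2*((r:ℝ)+1/2)/(2*(N:ℝ)+1))) *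
        Real.cos (π * ((b:ℝ)+1/2) * (2*((r:ℝ)+1/2)/(2*(N:ℝ)+1)))
      = (Real.cos ((2*(r:ℝ)+1) * (π*m1/(2*(N:ℝ)+1)))
          + Real.cos ((2*(r:ℝ)+1) * (π*m2/(2*(N:ℝ)+1))))/2 := by
    intro r
    rw [Real.cos_add_cos]
    rw [show ((2*(r:ℝ)+1) * (π*m1/(2*(N:ℝ)+1)) + (2*(r:ℝ)+1) * (π*m2/(2*(N:ℝ)+1)))/2
        = π * ((a:ℝ)+1/2) * (2*((r:ℝ)+1/2)/(2*(N:ℝ)+1)) by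
      push_cast [hm1, hm2]; field_simp; ring]
    rw [show ((2*(r:ℝ)+1) * (π*m1/(2*(N:ℝ)+1)) - (2*(r:ℝ)+1) * (π*m2/(2*(N:ℝ)+1)))/2
        = π * ((b:ℝ)+1/2) * (2*((r:ℝ)+1/2)/(2*(N:ℝ)+1)) by
      push_cast [hm1, hm2]; field_simp; ring]
    ring
  rw [Fin.sum_univ_eq_sum_range (fun v : ℕ =>
    Real.cos (π * ((a:ℝ)+1/2) * (2*((v:ℝ)+1/2)/(2*(N:ℝ)+1))) *
      Real.cos (π * ((b:ℝ)+1/2) * (2*((v:ℝ)+1/2)/(2*(N:ℝ)+1))))]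
  rw [Finset.sum_congr rfl (fun r _ => hterm r)]
  rw [← Finset.sum_div, Finset.sum_add_distrib]
  have hs1 : ∑ r ∈ Finset.range N, Real.cos ((2*(r:ℝ)+1) * (π*m1/(2*(N:ℝ)+1)))
      = - Real.cos (m1*π) / 2 := by
    apply sum_cos_m N m1 (by omega) (by rw [hm1, abs_lt]; omega)
  by_cases hab : a = b
  · subst hab
    rw [if_pos rfl, hs1]
    have hz : ∀ r ∈ Finset.range N, Real.cos ((2*(r:ℝ)+1) * (π*m2/(2*(N:ℝ)+1))) = 1 := by
      intro r _; rw [hm2]; simp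
    rw [Finset.sum_congr rfl hz, Finset.sum_const, cos_int_pi]
    rw [if_neg (by simp [hm1, Int.even_add_one, parity_simps]; exact fun h => (Nat.even_or_odd a).elim (fun he => Nat.not_even_iff_odd.mpr (h.mpr he) he) (fun ho => Nat.not_even_iff_odd.mpr ho (h.mp ho)))]
    simp only [card_range, nsmul_eq_mul, mul_one]
    ring
  · rw [if_neg hab, hs1]
    have hs2 : ∑ r ∈ Finset.range N, Real.cos ((2*(r:ℝ)+1) * (π*m2/(2*(N:ℝ)+1)))
        = - Real.cos (m2*π) / 2 := by
      apply sum_cos_m N m2 (by omega) (by rw [hm2, abs_lt]; omega)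
    rw [hs2, cos_int_pi, cos_int_pi]
    have hpar : Even m1 ↔ ¬ Even m2 := by
      rw [hm1, hm2, Int.even_add_one, Int.even_add, Int.even_sub]
      try tauto
    by_cases h2 : Even m2
    · rw [if_neg (by tauto), if_pos h2]; norm_num
    · rw [if_pos (hpar.mpr h2), if_neg h2]; norm_num

lemma cosPlus_comp (n : ℕ) (lam x : Fin n → ℝ) (σ : Equiv.Perm (Fin n)) :
    cosPlus n lam (fun i => x (σ i)) = cosPlus n lam x := by
  unfold cosPlus
  rw [← Equiv.sum_comp (Equiv.mulRight σ⁻¹)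
    (fun τ : Equiv.Perm (Fin n) => ∏ i, Real.cos (Real.pi * lam (τ i) * x i))]
  refine Finset.sum_congr rfl fun τ _ => ?_
  rw [← Equiv.prod_comp σ.symm
    (fun i => Real.cos (Real.pi * lam (τ i) * x (σ i)))]
  refine Finset.prod_congr rfl fun i _ => ?_
  simp [Equiv.mulRight]

lemma Hstab_pos {n : ℕ} {α : Type*} [DecidableEq α] (k : Fin n → α) : 0 < Hstab k := by
  apply Finset.card_pos.mpr
  exact ⟨1, by simp⟩

lemma card_fiber {n : ℕ} {α : Type*} [DecidableEq α] (r s : Fin n → α)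
    (σ0 : Equiv.Perm (Fin n)) (h : r ∘ σ0 = s) :
    (Finset.univ.filter fun σ : Equiv.Perm (Fin n) => r ∘ σ = s).card = Hstab r := by
  unfold Hstab
  apply Finset.card_bij' (fun σ _ => σ * σ0⁻¹) (fun σ _ => σ * σ0)
  · intro σ hσ
    simp only [Finset.mem_filter, Finset.mem_univ, true_and] at hσ ⊢
    funext i
    simp only [Function.comp_apply, Equiv.Perm.mul_apply]
    rw [show r (σ (σ0⁻¹ i)) = s (σ0⁻¹ i) from congrFun hσ _, ← h]
    simp
  · intro σ hσ
    simp only [Finset.mem_filter, Finset.mem_univ, true_and] at hσ ⊢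
    funext i
    simp only [Function.comp_apply, Equiv.Perm.mul_apply]
    rw [show r (σ (σ0 i)) = r (σ0 i) from congrFun hσ _, ← h]
    simp
  · intro σ _; simp [mul_assoc]
  · intro σ _; simp [mul_assoc]

lemma antitone_comp_eq {n : ℕ} {α : Type*} [LinearOrder α] {f : Fin n → α}
    {σ : Equiv.Perm (Fin n)} (h1 : Antitone (f ∘ σ)) (h2 : Antitone f) :
    f ∘ σ = f := by
  have key := Tuple.unique_monotone (α := αᵒᵈ)
    (f := fun i => OrderDual.toDual (f i)) (σ := σ) (τ := Equiv.refl _)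
    (fun a b hab => h1.dual_right hab) (fun a b hab => h2.dual_right hab)
  funext i
  exact congrFun key i

def sortPerm {n N : ℕ} (s : Fin n → Fin N) : Equiv.Perm (Fin n) :=
  Fin.revPerm.trans (Tuple.sort s)

def domRep {n N : ℕ} (s : Fin n → Fin N) : Fin n → Fin N := s ∘ (sortPerm s)

lemma domRep_antitone {n N : ℕ} (s : Fin n → Fin N) : Antitone (domRep s) := by
  intro a b hab
  exact Tuple.monotone_sort s (Fin.rev_le_rev.mpr hab)

lemma domRep_eq {n N : ℕ} (r : Fin n → Fin N) (h : Antitone r)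
    (σ : Equiv.Perm (Fin n)) : domRep (r ∘ ⇑σ) = r := by
  have h2 : (r ∘ ⇑σ) ∘ ⇑(sortPerm (r ∘ ⇑σ)) = r ∘ ⇑((sortPerm (r ∘ ⇑σ)).trans σ) := rfl
  have key := antitone_comp_eq (f := r) (σ := (sortPerm (r ∘ ⇑σ)).trans σ)
    (by rw [← h2]; exact domRep_antitone (r ∘ ⇑σ)) h
  calc domRep (r ∘ ⇑σ) = r ∘ ⇑((sortPerm (r ∘ ⇑σ)).trans σ) := rfl
  _ = r := key

lemma domRep_self {n N : ℕ} (r : Fin n → Fin N) (h : Antitone r) : domRep r = r :=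
  antitone_comp_eq (domRep_antitone r) h

lemma card_orbit_mul {n N : ℕ} (r : Fin n → Fin N) (h : Antitone r) :
    (Finset.univ.filter fun s : Fin n → Fin N => domRep s = r).card * Hstab r
      = Nat.factorial n := by
  have hmaps : ∀ σ ∈ (Finset.univ : Finset (Equiv.Perm (Fin n))),
      r ∘ ⇑σ ∈ Finset.univ.filter fun s : Fin n → Fin N => domRep s = r := by
    intro σ _
    simp only [Finset.mem_filter, Finset.mem_univ, true_and]
    exact domRep_eq r h σ
  have hcard := Finset.card_eq_sum_card_fiberwise hmaps
  rw [Finset.card_univ, Fintype.card_perm, Fintype.card_fin] at hcard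
  rw [hcard] at *
  rw [Finset.sum_congr rfl (fun s hs => ?_), Finset.sum_const, smul_eq_mul]
  have hds : domRep s = r := (Finset.mem_filter.mp hs).2
  have hσ0 : r ∘ ⇑((sortPerm s)⁻¹) = s := by
    funext i
    have := congrFun hds ((sortPerm s)⁻¹ i)
    simp only [domRep, Function.comp_apply] at this ⊢
    rw [← this]
    simp
  exact card_fiber r s (sortPerm s)⁻¹ hσ0

lemma sym_sum {n N : ℕ} (F : (Fin n → Fin N) → ℝ)
    (hF : ∀ (s : Fin n → Fin N) (σ : Equiv.Perm (Fin n)), F (s ∘ ⇑σ) = F s) :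
    ∑ r ∈ Finset.univ.filter
        (fun r : Fin n → Fin N => ∀ i j : Fin n, i ≤ j → (r j : ℕ) ≤ (r i : ℕ)),
      ((Hstab r : ℝ))⁻¹ * F r
    = (Nat.factorial n : ℝ)⁻¹ * ∑ s : Fin n → Fin N, F s := by
  have hmem : ∀ r : Fin n → Fin N,
      (r ∈ Finset.univ.filter
        (fun r : Fin n → Fin N => ∀ i j : Fin n, i ≤ j → (r j : ℕ) ≤ (r i : ℕ)))
      ↔ Antitone r := by
    intro r
    simp only [Finset.mem_filter, Finset.mem_univ, true_and]
    constructor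
    · intro h a b hab; exact Fin.le_def.mpr (h a b hab)
    · intro h i j hij; exact Fin.le_def.mp (h hij)
  have hmaps : ∀ s ∈ (Finset.univ : Finset (Fin n → Fin N)),
      domRep s ∈ Finset.univ.filter
        (fun r : Fin n → Fin N => ∀ i j : Fin n, i ≤ j → (r j : ℕ) ≤ (r i : ℕ)) := by
    intro s _; rw [hmem]; exact domRep_antitone s
  rw [← Finset.sum_fiberwise_of_maps_to hmaps F, Finset.mul_sum]
  apply Finset.sum_congr rfl
  intro r hr
  have hra : Antitone r := (hmem r).mp hr
  have hfs : ∀ s ∈ Finset.univ.filter (fun s : Fin n → Fin N => domRep s = r),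
      F s = F r := by
    intro s hs
    have h1 : domRep s = r := (Finset.mem_filter.mp hs).2
    calc F s = F (s ∘ ⇑(sortPerm s)) := (hF s (sortPerm s)).symm
    _ = F r := by rw [show s ∘ ⇑(sortPerm s) = domRep s from rfl, h1]
  rw [Finset.sum_congr rfl hfs, Finset.sum_const, nsmul_eq_mul]
  have hcount := card_orbit_mul r hra
  have hH : (Hstab r : ℝ) ≠ 0 := Nat.cast_ne_zero.mpr (Hstab_pos r).ne'
  have hfac : (Nat.factorial n : ℝ) ≠ 0 := Nat.cast_ne_zero.mpr (Nat.factorial_ne_zero n)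
  have hcastc : (((Finset.univ.filter fun s : Fin n → Fin N => domRep s = r).card : ℝ))
      * (Hstab r : ℝ) = (Nat.factorial n : ℝ) := by exact_mod_cast hcount
  have hcc : (((Finset.univ.filter fun s : Fin n → Fin N => domRep s = r).card : ℝ))
      = (Nat.factorial n : ℝ) / (Hstab r : ℝ) := by rw [eq_div_iff hH]; exact hcastc
  rw [hcc]
  field_simp

theorem SMDCT_VIII_orthogonality (n N : ℕ) (hn : 1 ≤ n) (hN : 1 ≤ N)
    (k k' : Fin n → ℕ)
    (hk : ∀ i j : Fin n, i ≤ j → k j ≤ k i) (hkb : ∀ i, k i ≤ N - 1)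
    (hk' : ∀ i j : Fin n, i ≤ j → k' j ≤ k' i) (hk'b : ∀ i, k' i ≤ N - 1) :
    ∑ r ∈ Finset.univ.filter
        (fun r : Fin n → Fin N => ∀ i j : Fin n, i ≤ j → (r j : ℕ) ≤ (r i : ℕ)),
      ((Hstab r : ℝ))⁻¹ *
        cosPlus n (fun i => (k i : ℝ) + 1 / 2)
          (fun i => 2 * (((r i : ℕ) : ℝ) + 1 / 2) / (2 * N + 1)) *
        cosPlus n (fun i => (k' i : ℝ) + 1 / 2)
          (fun i => 2 * (((r i : ℕ) : ℝ) + 1 / 2) / (2 * N + 1))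
      = (Hstab k : ℝ) * ((2 * (N : ℝ) + 1) / 4) ^ n *
          (if k = k' then (1 : ℝ) else 0) := by
  classical
  have hkN : ∀ i, k i < N := fun i => by have := hkb i; omega
  have hk'N : ∀ i, k' i < N := fun i => by have := hk'b i; omega
  have hka : Antitone k := fun a b hab => hk a b hab
  have hk'a : Antitone k' := fun a b hab => hk' a b hab
  set F : (Fin n → Fin N) → ℝ := fun r =>
      cosPlus n (fun i => (k i : ℝ) + 1 / 2)
          (fun i => 2 * (((r i : ℕ) : ℝ) + 1 / 2) / (2 * N + 1)) *
        cosPlus n (fun i => (k' i : ℝ) + 1 / 2)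
          (fun i => 2 * (((r i : ℕ) : ℝ) + 1 / 2) / (2 * N + 1)) with hFdef
  have hsym : ∀ (s : Fin n → Fin N) (σ : Equiv.Perm (Fin n)), F (s ∘ ⇑σ) = F s := by
    intro s σ
    simp only [hFdef]
    exact congrArg₂ (· * ·)
      (cosPlus_comp n (fun i => (k i : ℝ) + 1/2)
        (fun j => 2 * (((s j : ℕ) : ℝ) + 1 / 2) / (2 * (N:ℝ) + 1)) σ)
      (cosPlus_comp n (fun i => (k' i : ℝ) + 1/2)
        (fun j => 2 * (((s j : ℕ) : ℝ) + 1 / 2) / (2 * (N:ℝ) + 1)) σ)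
  have step1 : ∑ r ∈ Finset.univ.filter
        (fun r : Fin n → Fin N => ∀ i j : Fin n, i ≤ j → (r j : ℕ) ≤ (r i : ℕ)),
      ((Hstab r : ℝ))⁻¹ *
        cosPlus n (fun i => (k i : ℝ) + 1 / 2)
          (fun i => 2 * (((r i : ℕ) : ℝ) + 1 / 2) / (2 * N + 1)) *
        cosPlus n (fun i => (k' i : ℝ) + 1 / 2)
          (fun i => 2 * (((r i : ℕ) : ℝ) + 1 / 2) / (2 * N + 1))
      = ∑ r ∈ Finset.univ.filter
        (fun r : Fin n → Fin N => ∀ i j : Fin n, i ≤ j → (r j : ℕ) ≤ (r i : ℕ)),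
      ((Hstab r : ℝ))⁻¹ * F r :=
    Finset.sum_congr rfl (fun r _ => mul_assoc _ _ _)
  rw [step1, sym_sum F hsym]
  -- expand F
  have hexp : ∀ s : Fin n → Fin N, F s
      = ∑ σ : Equiv.Perm (Fin n), ∑ τ : Equiv.Perm (Fin n), ∏ i : Fin n,
          (Real.cos (π * ((k (σ i) : ℝ) + 1 / 2)
              * (2 * (((s i : ℕ) : ℝ) + 1 / 2) / (2 * (N:ℝ) + 1)))
            * Real.cos (π * ((k' (τ i) : ℝ) + 1 / 2)
              * (2 * (((s i : ℕ) : ℝ) + 1 / 2) / (2 * (N:ℝ) + 1)))) := by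
    intro s
    simp only [hFdef, cosPlus]
    rw [Finset.sum_mul_sum]
    exact Finset.sum_congr rfl fun σ _ => Finset.sum_congr rfl fun τ _ =>
      (Finset.prod_mul_distrib).symm
  rw [Finset.sum_congr rfl (fun s _ => hexp s)]
  rw [Finset.sum_comm]
  rw [Finset.sum_congr rfl (fun σ (_ : σ ∈ Finset.univ) => Finset.sum_comm)]
  -- factor over coordinates
  have hfac : ∀ σ τ : Equiv.Perm (Fin n),
      (∑ s : Fin n → Fin N, ∏ i : Fin n,
        (Real.cos (π * ((k (σ i) : ℝ) + 1 / 2)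
            * (2 * (((s i : ℕ) : ℝ) + 1 / 2) / (2 * (N:ℝ) + 1)))
          * Real.cos (π * ((k' (τ i) : ℝ) + 1 / 2)
            * (2 * (((s i : ℕ) : ℝ) + 1 / 2) / (2 * (N:ℝ) + 1)))))
      = ∏ i : Fin n, ∑ v : Fin N,
          (Real.cos (π * ((k (σ i) : ℝ) + 1 / 2)
              * (2 * (((v : ℕ) : ℝ) + 1 / 2) / (2 * (N:ℝ) + 1)))
            * Real.cos (π * ((k' (τ i) : ℝ) + 1 / 2)
              * (2 * (((v : ℕ) : ℝ) + 1 / 2) / (2 * (N:ℝ) + 1)))) := by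
    intro σ τ
    rw [Finset.prod_univ_sum]
    rw [Fintype.piFinset_univ]
  have h1d : ∀ σ τ : Equiv.Perm (Fin n), ∀ i : Fin n,
      (∑ v : Fin N,
          (Real.cos (π * ((k (σ i) : ℝ) + 1 / 2)
              * (2 * (((v : ℕ) : ℝ) + 1 / 2) / (2 * (N:ℝ) + 1)))
            * Real.cos (π * ((k' (τ i) : ℝ) + 1 / 2)
              * (2 * (((v : ℕ) : ℝ) + 1 / 2) / (2 * (N:ℝ) + 1)))))
      = if k (σ i) = k' (τ i) then (2*(N:ℝ)+1)/4 else 0 :=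
    fun σ τ i => oneD N (k (σ i)) (k' (τ i)) (hkN _) (hk'N _)
  have hprodite : ∀ σ τ : Equiv.Perm (Fin n),
      (∏ i : Fin n, if k (σ i) = k' (τ i) then (2*(N:ℝ)+1)/4 else 0)
      = if k ∘ ⇑σ = k' ∘ ⇑τ then ((2*(N:ℝ)+1)/4)^n else 0 := by
    intro σ τ
    by_cases h : k ∘ ⇑σ = k' ∘ ⇑τ
    · have h' : ∀ i, k (σ i) = k' (τ i) := fun i => congrFun h i
      rw [if_pos h, Finset.prod_congr rfl (fun i _ => if_pos (h' i)),
        Finset.prod_const, Finset.card_univ, Fintype.card_fin]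
    · rw [if_neg h]
      obtain ⟨i, hi⟩ : ∃ i, k (σ i) ≠ k' (τ i) := by
        by_contra hc; push_neg at hc; exact h (funext hc)
      exact Finset.prod_eq_zero (Finset.mem_univ i) (if_neg hi)
  have hmid : ∀ σ τ : Equiv.Perm (Fin n),
      (∑ s : Fin n → Fin N, ∏ i : Fin n,
        (Real.cos (π * ((k (σ i) : ℝ) + 1 / 2)
            * (2 * (((s i : ℕ) : ℝ) + 1 / 2) / (2 * (N:ℝ) + 1)))
          * Real.cos (π * ((k' (τ i) : ℝ) + 1 / 2)
            * (2 * (((s i : ℕ) : ℝ) + 1 / 2) / (2 * (N:ℝ) + 1)))))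
      = if k ∘ ⇑σ = k' ∘ ⇑τ then ((2*(N:ℝ)+1)/4)^n else 0 := by
    intro σ τ
    rw [hfac σ τ, Finset.prod_congr rfl (fun i _ => h1d σ τ i), hprodite σ τ]
  rw [Finset.sum_congr rfl (fun σ (_ : σ ∈ Finset.univ) =>
    Finset.sum_congr rfl (fun τ (_ : τ ∈ Finset.univ) => hmid σ τ))]
  -- final counting
  by_cases hkk : k = k'
  · subst hkk
    rw [if_pos rfl]
    have hτ : ∀ σ : Equiv.Perm (Fin n),
        (∑ τ : Equiv.Perm (Fin n),
          if k ∘ ⇑σ = k ∘ ⇑τ then ((2*(N:ℝ)+1)/4)^n else 0)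
        = (Hstab k : ℝ) * ((2*(N:ℝ)+1)/4)^n := by
      intro σ
      have hcard : (Finset.univ.filter fun τ : Equiv.Perm (Fin n) =>
          k ∘ ⇑σ = k ∘ ⇑τ).card = Hstab k := by
        rw [show (Finset.univ.filter fun τ : Equiv.Perm (Fin n) => k ∘ ⇑σ = k ∘ ⇑τ)
            = (Finset.univ.filter fun τ : Equiv.Perm (Fin n) => k ∘ ⇑τ = k ∘ ⇑σ) from
          Finset.filter_congr (fun τ _ => by rw [eq_comm])]
        exact card_fiber k (k ∘ ⇑σ) σ rfl
      rw [← Finset.sum_filter, Finset.sum_const, hcard, nsmul_eq_mul]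
    rw [Finset.sum_congr rfl (fun σ _ => hτ σ), Finset.sum_const,
      Finset.card_univ, Fintype.card_perm, Fintype.card_fin, nsmul_eq_mul]
    have hfacne : (Nat.factorial n : ℝ) ≠ 0 := Nat.cast_ne_zero.mpr (Nat.factorial_ne_zero n)
    field_simp
  · rw [if_neg hkk]
    have hz : ∀ σ τ : Equiv.Perm (Fin n),
        (if k ∘ ⇑σ = k' ∘ ⇑τ then ((2*(N:ℝ)+1)/4)^n else 0) = 0 := by
      intro σ τ
      rw [if_neg]
      intro h
      apply hkk
      have hπ : k = k' ∘ ⇑(σ.symm.trans τ) := by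
        funext i
        have := congrFun h (σ.symm i)
        simpa using this
      have h1 : Antitone (k' ∘ ⇑(σ.symm.trans τ)) := by rw [← hπ]; exact hka
      rw [hπ, antitone_comp_eq h1 hk'a]
    simp only [hz, Finset.sum_const_zero, mul_zero]
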